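/- In the diagonalization setting, fix β ∈ ℂ and let Ω_p(β) := {j : ord_β(d_j) ≤ −1} be the set of indices whose diagonal entry has a pole at β. Then: (1) the vectors {Ŝ_j(β) : j ∈ Ω_p(β)} are linearly independent in ℂⁿ; and (2) for every vector φ̂ with entries in ℂ[X] such that φ̂(β) ≠ 0 and such that every component of Q⁻¹.mulVec φ̂ (over RatFunc ℂ) is either zero or has ord_β ≥ 1, the vector φ̂(β) lies in the ℂ-linear span of {Ŝ_j(β) : j ∈ Ω_p(β)}. Hence this span is the generalized kernel of Q⁻¹ at β and its dimension is the geometric multiplicity of the pole β of Q. -/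

import Mathlib

set_option synthInstance.maxHeartbeats 1000000
set_option maxHeartbeats 1000000

/-- `HasOrdAt α r k` : the rational function `r` has order `k ∈ ℤ` at `α`, i.e.
`r = (X − α)^k · (p/q)` with `p(α) ≠ 0` and `q(α) ≠ 0`. -/
def HasOrdAt (α : ℂ) (r : RatFunc ℂ) (k : ℤ) : Prop :=
  ∃ p q : Polynomial ℂ, Polynomial.eval α p ≠ 0 ∧ Polynomial.eval α q ≠ 0 ∧
    r = (RatFunc.X - RatFunc.C α) ^ k *
      (algebraMap (Polynomial ℂ) (RatFunc ℂ) p / algebraMap (Polynomial ℂ) (RatFunc ℂ) q)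

local notation "aP" => algebraMap (Polynomial ℂ) (RatFunc ℂ)

lemma aP_ne {q : Polynomial ℂ} (h : q ≠ 0) : aP q ≠ 0 := by
  intro h0
  exact h (RatFunc.algebraMap_injective ℂ (by simpa using h0))

def Vanish (β : ℂ) (r : RatFunc ℂ) : Prop :=
  ∃ p q : Polynomial ℂ, Polynomial.eval β q ≠ 0 ∧ Polynomial.eval β p = 0 ∧
    r = aP p / aP q

lemma vanish_zero (β : ℂ) : Vanish β 0 := ⟨0, 1, by simp, by simp, by simp⟩

lemma Vanish.add {β : ℂ} {r s : RatFunc ℂ} (hr : Vanish β r) (hs : Vanish β s) :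
    Vanish β (r + s) := by
  obtain ⟨p1, q1, hq1, hp1, rfl⟩ := hr
  obtain ⟨p2, q2, hq2, hp2, rfl⟩ := hs
  have h1 : aP q1 ≠ 0 := aP_ne (fun h => hq1 (by simp [h]))
  have h2 : aP q2 ≠ 0 := aP_ne (fun h => hq2 (by simp [h]))
  refine ⟨p1 * q2 + p2 * q1, q1 * q2,
    by rw [Polynomial.eval_mul]; exact mul_ne_zero hq1 hq2,
    by simp [hp1, hp2], ?_⟩
  rw [div_add_div _ _ h1 h2, map_add, map_mul, map_mul, map_mul]
  congr 1
  ring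

lemma Vanish.poly_mul {β : ℂ} {r : RatFunc ℂ} (t : Polynomial ℂ) (hr : Vanish β r) :
    Vanish β (aP t * r) := by
  obtain ⟨p, q, hq, hp, rfl⟩ := hr
  exact ⟨t * p, q, hq, by simp [hp], by rw [map_mul, mul_div_assoc]⟩

lemma Vanish.sum {β : ℂ} {ι : Type*} (s : Finset ι) (f : ι → RatFunc ℂ)
    (h : ∀ i ∈ s, Vanish β (f i)) : Vanish β (∑ i ∈ s, f i) := by
  classical
  induction s using Finset.induction_on with
  | empty => simpa using vanish_zero β
  | insert _ _ hi ih =>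
    rw [Finset.sum_insert hi]
    exact (h _ (Finset.mem_insert_self _ _)).add
      (ih fun i his => h i (Finset.mem_insert_of_mem his))

lemma vanish_of_ord {β : ℂ} {r : RatFunc ℂ} (h : ∃ m : ℤ, 1 ≤ m ∧ HasOrdAt β r m) :
    Vanish β r := by
  obtain ⟨m, hm, p, q, hp, hq, hr⟩ := h
  lift m to ℕ using (by omega : (0:ℤ) ≤ m) with mn
  have hmn : mn ≠ 0 := by omega
  refine ⟨(Polynomial.X - Polynomial.C β) ^ mn * p, q, hq, ?_, ?_⟩
  · simp [sub_self, zero_pow hmn]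
  · rw [hr, zpow_natCast, map_mul, map_pow, map_sub, RatFunc.algebraMap_X,
      RatFunc.algebraMap_C, mul_div_assoc]

lemma pole_of_vanish {β : ℂ} {d : RatFunc ℂ} (hd : d ≠ 0) {ψ : Polynomial ℂ}
    (hψ : Polynomial.eval β ψ ≠ 0) (hv : Vanish β (d⁻¹ * aP ψ)) :
    ∃ t : ℤ, t ≤ -1 ∧ HasOrdAt β d t := by
  obtain ⟨p, q, hq, hp0, heq⟩ := hv
  have hψ0 : ψ ≠ 0 := fun h => hψ (by simp [h])
  have haψ : aP ψ ≠ 0 := aP_ne hψ0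
  have hq0 : aP q ≠ 0 := aP_ne (fun h => hq (by simp [h]))
  have hne : d⁻¹ * aP ψ ≠ 0 := mul_ne_zero (inv_ne_zero hd) haψ
  have hpne : p ≠ 0 := by
    intro h; rw [h] at heq; simp only [map_zero, zero_div] at heq; exact hne heq
  set m := p.rootMultiplicity β with hm
  have hm1 : 1 ≤ m := (Polynomial.rootMultiplicity_pos hpne).mpr hp0
  set u := p /ₘ (Polynomial.X - Polynomial.C β) ^ m with hu
  have hpu : (Polynomial.X - Polynomial.C β) ^ m * u = p :=
    Polynomial.pow_mul_divByMonic_rootMultiplicity_eq p β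
  have huβ : Polynomial.eval β u ≠ 0 :=
    Polynomial.eval_divByMonic_pow_rootMultiplicity_ne_zero β hpne
  refine ⟨-(m : ℤ), by omega, ψ * q, u, by simp [hψ, hq], huβ, ?_⟩
  have hXC : (RatFunc.X - RatFunc.C β) = aP (Polynomial.X - Polynomial.C β) := by
    rw [map_sub, RatFunc.algebraMap_X, RatFunc.algebraMap_C]
  have hXCne : aP (Polynomial.X - Polynomial.C β) ≠ 0 :=
    aP_ne (Polynomial.X_sub_C_ne_zero β)
  have hau : aP u ≠ 0 := aP_ne (fun h => huβ (by simp [h]))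
  have hap : aP p = aP (Polynomial.X - Polynomial.C β) ^ m * aP u := by
    rw [← map_pow, ← map_mul, hpu]
  have hapne : aP p ≠ 0 := aP_ne hpne
  have h2 : aP ψ = d * (aP p / aP q) := by
    calc aP ψ = d * (d⁻¹ * aP ψ) := by rw [← mul_assoc, mul_inv_cancel₀ hd, one_mul]
    _ = d * (aP p / aP q) := by rw [heq]
  have hd' : d = aP ψ * aP q / aP p := by
    rw [h2]; field_simp
  rw [zpow_neg, zpow_natCast, hXC, hd', hap, map_mul]
  field_simp

/-- Entrywise embedding of a polynomial matrix into matrices over `RatFunc ℂ`. -/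
noncomputable def matRF {n : ℕ} (M : Matrix (Fin n) (Fin n) (Polynomial ℂ)) :
    Matrix (Fin n) (Fin n) (RatFunc ℂ) :=
  M.map (algebraMap (Polynomial ℂ) (RatFunc ℂ))

/-- The `i`-th column of a polynomial matrix, regarded over `RatFunc ℂ`. -/
noncomputable def colRF {n : ℕ} (M : Matrix (Fin n) (Fin n) (Polynomial ℂ)) (i : Fin n) :
    Fin n → RatFunc ℂ :=
  fun k => algebraMap (Polynomial ℂ) (RatFunc ℂ) (M k i)

/-- The `i`-th column of a polynomial matrix evaluated (entrywise) at `α`. -/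
def evalCol {n : ℕ} (M : Matrix (Fin n) (Fin n) (Polynomial ℂ)) (i : Fin n) (α : ℂ) :
    Fin n → ℂ :=
  fun k => Polynomial.eval α (M k i)

/-- In the diagonalization setting `D = S·Q·T`, for `β ∈ ℂ` let
`Ω_p(β)` consist of the indices `j` with `ord_β(d_j) ≤ −1`. Then the vectors `Ŝ_j(β)`,
`j ∈ Ω_p(β)`, are linearly independent, and for every polynomial vector `φ̂` with
`φ̂(β) ≠ 0` all of whose components of `Q⁻¹.mulVec φ̂` are zero or of order `≥ 1` at
`β`, the vector `φ̂(β)` lies in the span of `{Ŝ_j(β) : j ∈ Ω_p(β)}`: this span is the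
generalized kernel of `Q⁻¹` at `β`, whose dimension is the geometric multiplicity of
the pole `β` of `Q`. -/
theorem generalized_kernel_of_Q_inv_at_pole
    (n : ℕ) (hn : 1 ≤ n)
    (Q : Matrix (Fin n) (Fin n) (RatFunc ℂ)) (hQ : Q.det ≠ 0)
    (S T : Matrix (Fin n) (Fin n) (Polynomial ℂ))
    (hS : IsUnit S.det) (hT : IsUnit T.det)
    (D : Matrix (Fin n) (Fin n) (RatFunc ℂ))
    (hD : D = matRF S * Q * matRF T) (hdiag : D.IsDiag)
    (β : ℂ) :
    LinearIndependent ℂ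
      (fun j : {j : Fin n // ∃ t : ℤ, t ≤ -1 ∧ HasOrdAt β (D j j) t} =>
        evalCol (S⁻¹) j.1 β) ∧
    ∀ φ : Fin n → Polynomial ℂ,
      (fun k => Polynomial.eval β (φ k)) ≠ 0 →
      (∀ k : Fin n,
          Q⁻¹.mulVec (fun j => algebraMap (Polynomial ℂ) (RatFunc ℂ) (φ j)) k = 0 ∨
          ∃ m : ℤ, 1 ≤ m ∧
            HasOrdAt β (Q⁻¹.mulVec (fun j => algebraMap (Polynomial ℂ) (RatFunc ℂ) (φ j)) k) m) →
      (fun k => Polynomial.eval β (φ k)) ∈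
        Submodule.span ℂ
          {v : Fin n → ℂ | ∃ j : Fin n, (∃ t : ℤ, t ≤ -1 ∧ HasOrdAt β (D j j) t) ∧
            v = evalCol (S⁻¹) j β} := by
  classical
  have hSS : S⁻¹ * S = 1 := Matrix.nonsing_inv_mul S hS
  -- Part 1
  have hSinvdet : IsUnit (S⁻¹).det :=
    IsUnit.of_mul_eq_one S.det (by rw [← Matrix.det_mul, hSS, Matrix.det_one])
  have hMdet : IsUnit ((S⁻¹).map (Polynomial.evalRingHom β)).det := by
    have : ((S⁻¹).map (Polynomial.evalRingHom β)).det
        = (Polynomial.evalRingHom β) (S⁻¹).det :=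
      ((Polynomial.evalRingHom β).map_det (S⁻¹)).symm
    rw [this]
    exact hSinvdet.map (Polynomial.evalRingHom β)
  have hMunit : IsUnit ((S⁻¹).map (Polynomial.evalRingHom β)) :=
    (Matrix.isUnit_iff_isUnit_det _).mpr hMdet
  have hli : LinearIndependent ℂ (fun i => Matrix.transpose ((S⁻¹).map (Polynomial.evalRingHom β)) i) :=
    Matrix.linearIndependent_cols_iff_isUnit.mpr hMunit
  have hli2 : LinearIndependent ℂ (fun j : Fin n => evalCol (S⁻¹) j β) := hli
  constructor
  · exact hli2.comp Subtype.val Subtype.val_injective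
  -- Part 2
  intro φ hφ hcomp
  have hdetmat : ∀ M : Matrix (Fin n) (Fin n) (Polynomial ℂ),
      (matRF M).det = aP M.det := fun M =>
    ((algebraMap (Polynomial ℂ) (RatFunc ℂ)).map_det M).symm
  have hSd : IsUnit (matRF S).det := by
    rw [hdetmat]
    exact isUnit_iff_ne_zero.mpr (aP_ne hS.ne_zero)
  have hTd : IsUnit (matRF T).det := by
    rw [hdetmat]
    exact isUnit_iff_ne_zero.mpr (aP_ne hT.ne_zero)
  have hDdet : D.det ≠ 0 := by
    rw [hD, Matrix.det_mul, Matrix.det_mul]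
    exact mul_ne_zero (mul_ne_zero hSd.ne_zero hQ) hTd.ne_zero
  have hDunit : IsUnit D.det := isUnit_iff_ne_zero.mpr hDdet
  have hQinv : Q⁻¹ = matRF T * D⁻¹ * matRF S := by
    apply Matrix.inv_eq_right_inv
    have h2 : Q * matRF T = (matRF S)⁻¹ * D := by
      rw [hD, ← Matrix.mul_assoc, ← Matrix.mul_assoc, Matrix.nonsing_inv_mul _ hSd,
        Matrix.one_mul]
    calc Q * (matRF T * D⁻¹ * matRF S)
        = (Q * matRF T) * D⁻¹ * matRF S := by simp only [Matrix.mul_assoc]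
      _ = (matRF S)⁻¹ * (D * D⁻¹) * matRF S := by
          rw [h2]; simp only [Matrix.mul_assoc]
      _ = 1 := by
          rw [Matrix.mul_nonsing_inv _ hDunit, Matrix.mul_one,
            Matrix.nonsing_inv_mul _ hSd]
  set φR : Fin n → RatFunc ℂ := fun j => aP (φ j) with hφR
  set ψ : Fin n → Polynomial ℂ := S.mulVec φ with hψdef
  have hSψ : (matRF S).mulVec φR = fun k => aP (ψ k) := by
    funext k
    exact (RingHom.map_mulVec (algebraMap (Polynomial ℂ) (RatFunc ℂ)) S φ k).symm
  have hDdiag : Matrix.diagonal (fun j => D j j) = D := hdiag.diagonal_diag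
  have hdj : ∀ j, D j j ≠ 0 := by
    intro j h0
    apply hDdet
    rw [← hDdiag, Matrix.det_diagonal]
    exact Finset.prod_eq_zero (Finset.mem_univ j) h0
  have hDinv : D⁻¹ = Matrix.diagonal (fun j => (D j j)⁻¹) := by
    apply Matrix.inv_eq_right_inv
    ext i k
    rw [Matrix.mul_diagonal]
    by_cases h : i = k
    · subst h
      simp [mul_inv_cancel₀ (hdj i), Matrix.one_apply]
    · simp [hdiag h, Matrix.one_apply, h]
  have hTT : matRF T⁻¹ * matRF T = 1 := by
    rw [matRF, matRF, ← Matrix.map_mul, Matrix.nonsing_inv_mul T hT, Matrix.map_one] <;> simp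
  have hstep : D⁻¹.mulVec (fun k => aP (ψ k)) = (matRF T⁻¹).mulVec (Q⁻¹.mulVec φR) := by
    rw [hQinv, ← Matrix.mulVec_mulVec, ← Matrix.mulVec_mulVec, hSψ,
      Matrix.mulVec_mulVec, hTT, Matrix.one_mulVec]
  have hkey : ∀ j, Vanish β ((D j j)⁻¹ * aP (ψ j)) := by
    intro j
    have h1 := congrFun hstep j
    rw [hDinv, Matrix.mulVec_diagonal] at h1
    rw [h1]
    show Vanish β ((matRF T⁻¹).mulVec (Q⁻¹.mulVec φR) j)
    rw [Matrix.mulVec, dotProduct]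
    apply Vanish.sum
    intro k _
    have : matRF T⁻¹ j k = aP (T⁻¹ j k) := rfl
    rw [this]
    rcases hcomp k with h0 | hord
    · rw [show Q⁻¹.mulVec φR k = 0 from h0, mul_zero]
      exact vanish_zero β
    · exact (vanish_of_ord hord).poly_mul _
  have hψ0 : ∀ j, (¬ ∃ t : ℤ, t ≤ -1 ∧ HasOrdAt β (D j j) t) →
      Polynomial.eval β (ψ j) = 0 := by
    intro j hj
    by_contra h
    exact hj (pole_of_vanish (hdj j) h (hkey j))
  have hrec : (S⁻¹).mulVec ψ = φ := by
    rw [hψdef, Matrix.mulVec_mulVec, hSS, Matrix.one_mulVec]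
  have hrepr : (fun k => Polynomial.eval β (φ k))
      = ∑ j, Polynomial.eval β (ψ j) • evalCol (S⁻¹) j β := by
    funext k
    rw [← hrec]
    rw [Finset.sum_apply]
    simp only [Matrix.mulVec, dotProduct, Polynomial.eval_finset_sum,
      Polynomial.eval_mul, Pi.smul_apply, smul_eq_mul, evalCol]
    exact Finset.sum_congr rfl fun j _ => mul_comm _ _
  rw [hrepr]
  apply Submodule.sum_mem
  intro j _
  by_cases hj : ∃ t : ℤ, t ≤ -1 ∧ HasOrdAt β (D j j) t
  · exact Submodule.smul_mem _ _ (Submodule.subset_span ⟨j, hj, rfl⟩)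
  · rw [hψ0 j hj, zero_smul]
    exact Submodule.zero_mem _
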